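/- Let A be a commutative ℚ-algebra, ε ∈ {1, −1}, and let (a_{ij}) be a family of elements of A indexed by ordered pairs of distinct elements i ≠ j of an index set, satisfying: a_{ji} = ε·a_{ij} for all i ≠ j; a_{ij}² = 0 for all i ≠ j; and the Arnol'd relation a_{ij}·a_{jk} + a_{jk}·a_{ki} + a_{ki}·a_{ij} = 0 for all pairwise distinct i, j, k. Then for every r ≥ 2 and every sequence of pairwise distinct indices i_1, i_2, …, i_r, the cyclic product a_{i_1 i_2} · a_{i_2 i_3} · ⋯ · a_{i_{r-1} i_r} · a_{i_r i_1} equals 0. -/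

import Mathlib

section Aux

variable {A : Type*} [CommRing A] {ι : Type*}

/-- Product `a x y₁ * a y₁ y₂ * ⋯ * a yₙ z` along a path. -/
def achain (a : ι → ι → A) : ι → List ι → ι → A
  | x, [], z => a x z
  | x, y :: l, z => a x y * achain a y l z

lemma achain_cycle_zero (ε : A) (hε2 : ε * ε = 1)
    (a : ι → ι → A)
    (hsym : ∀ i j, i ≠ j → a j i = ε * a i j)
    (hsq : ∀ i j, i ≠ j → a i j * a i j = 0)
    (harn : ∀ i j k, i ≠ j → j ≠ k → i ≠ k →
      a i j * a j k + a j k * a k i + a k i * a i j = 0) :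
    ∀ (l : List ι) (x : ι), l ≠ [] → (x :: l).Nodup → achain a x l x = 0 := by
  intro l
  induction l with
  | nil => intro x h _; exact absurd rfl h
  | cons y l ih =>
    intro x _ hnd
    match l with
    | [] =>
      have hxy : x ≠ y := by simp at hnd; tauto
      show a x y * a y x = 0
      rw [hsym x y hxy]
      linear_combination ε * hsq x y hxy
    | z :: l' =>
      have hxy : x ≠ y := by simp at hnd; tauto
      have hyz : y ≠ z := by simp at hnd; tauto
      have hxz : x ≠ z := by simp at hnd; tauto
      have hnd' : (x :: z :: l').Nodup := by
        simp only [List.nodup_cons, List.mem_cons] at hnd ⊢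
        tauto
      have hzero : achain a x (z :: l') x = 0 := ih x (by simp) hnd'
      have hz : a x z * achain a z l' x = 0 := hzero
      have hz' : a z x * achain a z l' x = 0 := by
        rw [hsym x z hxz, mul_assoc, hz, mul_zero]
      show a x y * (a y z * achain a z l' x) = 0
      linear_combination (achain a z l' x) * harn x y z hxy hyz hxz
        - (a y z + a x y) * hz'

lemma ofFn_prod_eq_achain (a : ι → ι → A) :
    ∀ (n : ℕ) (f : Fin (n + 1) → ι) (z : ι),
    (List.ofFn (fun k : Fin (n + 1) =>
        a (f k) (if h : k.val + 1 < n + 1 then f ⟨k.val + 1, h⟩ else z))).prod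
      = achain a (f 0) (List.ofFn fun k : Fin n => f k.succ) z := by
  intro n
  induction n with
  | zero => intro f z; simp [achain]
  | succ n ih =>
    intro f z
    have h0 : (List.ofFn fun k : Fin (n + 1) => f k.succ)
        = f 1 :: List.ofFn fun k : Fin n => f k.succ.succ := by
      rw [List.ofFn_succ, Fin.succ_zero_eq_one]
    have key := ih (fun k => f k.succ) z
    have hlist : (fun i : Fin (n + 1) => a (f i.succ)
          (if h : i.succ.val + 1 < n + 1 + 1 then f ⟨i.succ.val + 1, h⟩ else z))
        = (fun k : Fin (n + 1) => a (f k.succ)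
          (if h : k.val + 1 < n + 1 then f (⟨k.val + 1, h⟩ : Fin (n + 1)).succ else z)) := by
      funext k
      congr 1
      by_cases h : k.val + 1 < n + 1
      · rw [dif_pos (show k.succ.val + 1 < n + 1 + 1 by simp; omega), dif_pos h]
        congr 1
      · rw [dif_neg (by simp; omega), dif_neg h]
    rw [List.ofFn_succ, List.prod_cons, h0]
    show a (f 0) _ * _ = a (f 0) (f 1) * achain a (f 1) (List.ofFn fun k : Fin n => f k.succ.succ) z
    rw [hlist, key]
    congr 2

end Aux

/-- In a commutative `ℚ`-algebra, given a family `a i j` (for `i ≠ j`) with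
`a j i = ε a i j` (`ε = ±1`), `(a i j)² = 0` and the Arnol'd relations, every cyclic
product `a_{i₁ i₂} a_{i₂ i₃} ⋯ a_{i_r i₁}` over `r ≥ 2` pairwise distinct indices
vanishes. -/
theorem stmt7 (A : Type*) [CommRing A] [Algebra ℚ A] (ι : Type*) (ε : A)
    (hε : ε = 1 ∨ ε = -1)
    (a : ι → ι → A)
    (hsym : ∀ i j, i ≠ j → a j i = ε * a i j)
    (hsq : ∀ i j, i ≠ j → a i j * a i j = 0)
    (harn : ∀ i j k, i ≠ j → j ≠ k → i ≠ k →
      a i j * a j k + a j k * a k i + a k i * a i j = 0)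
    (r : ℕ) (hr : 2 ≤ r) (f : Fin r → ι) (hf : Function.Injective f) :
    ∏ k : Fin r, a (f k) (f ⟨(k.val + 1) % r, Nat.mod_lt _ (by omega)⟩) = 0 := by
  have hε2 : ε * ε = 1 := by rcases hε with h | h <;> simp [h]
  obtain ⟨n, rfl⟩ : ∃ n, r = n + 1 := ⟨r - 1, by omega⟩
  have key : ∀ k : Fin (n + 1),
      (f ⟨(k.val + 1) % (n + 1), Nat.mod_lt _ (by omega)⟩)
        = (if h : k.val + 1 < n + 1 then f ⟨k.val + 1, h⟩ else f 0) := by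
    intro k
    by_cases h : k.val + 1 < n + 1
    · rw [dif_pos h]
      congr 1
      exact Fin.ext (Nat.mod_eq_of_lt h)
    · rw [dif_neg h]
      have h1 : (k.val + 1) % (n + 1) = 0 := by
        have : k.val + 1 = n + 1 := by omega
        simp [this]
      congr 1
      exact Fin.ext (by simpa using h1)
  have hprod : ∏ k : Fin (n + 1), a (f k) (f ⟨(k.val + 1) % (n + 1), Nat.mod_lt _ (by omega)⟩)
      = (List.ofFn (fun k : Fin (n + 1) =>
          a (f k) (if h : k.val + 1 < n + 1 then f ⟨k.val + 1, h⟩ else f 0))).prod := by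
    rw [List.prod_ofFn]
    exact Finset.prod_congr rfl fun k _ => by rw [key k]
  rw [hprod, ofFn_prod_eq_achain a n f (f 0)]
  apply achain_cycle_zero ε hε2 a hsym hsq harn
  · intro h
    have : n = 0 := by simpa using congrArg List.length h
    omega
  · have h2 : (f 0 :: List.ofFn fun k : Fin n => f k.succ) = List.ofFn f := by
      rw [List.ofFn_succ]
    rw [h2]
    exact (List.nodup_ofFn).mpr hf
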